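/- Let N be a finitely generated S-secondary submodule of an R-module M. Then S⁻¹N is a secondary submodule of the S⁻¹R-module S⁻¹M (i.e., S⁻¹N ≠ 0 and for every r/t ∈ S⁻¹R, either (r/t)·S⁻¹N = S⁻¹N or (r/t)^k·S⁻¹N = 0 for some k ≥ 1). -/

import Mathlib

open Pointwise

/-- A multiplicatively closed subset of `R`: `0 ∉ S`, `1 ∈ S`, closed under products. -/
def MultClosedSet {R : Type*} [CommRing R] (S : Set R) : Prop :=
  (0 : R) ∉ S ∧ (1 : R) ∈ S ∧ ∀ a ∈ S, ∀ b ∈ S, a * b ∈ S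

/-- `N` is an `S`-secondary submodule of `M`. -/
def IsSSecondary {R : Type*} [CommRing R] {M : Type*} [AddCommGroup M] [Module R M]
    (S : Set R) (N : Submodule R M) : Prop :=
  ((N.annihilator.radical : Set R) ∩ S = ∅) ∧
    ∃ s ∈ S, ∀ r : R, (s * r) • N = s • N ∨ ∃ t : ℕ, 1 ≤ t ∧ ((s * r) ^ t) • N = ⊥

/-- `N` is a secondary submodule of `M`. -/
def IsSecondary {R : Type*} [CommRing R] {M : Type*} [AddCommGroup M] [Module R M]
    (N : Submodule R M) : Prop :=
  N ≠ ⊥ ∧ ∀ r : R, r • N = N ∨ ∃ t : ℕ, 1 ≤ t ∧ (r ^ t) • N = ⊥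

lemma aux_mem_psmul {A B : Type*} [CommRing A] [AddCommGroup B] [Module A B]
    (a : A) (K : Submodule A B) (x : B) : x ∈ a • K ↔ ∃ y ∈ K, a • y = x := Iff.rfl

lemma aux_unit_smul {A B : Type*} [CommRing A] [AddCommGroup B] [Module A B]
    {u : A} (hu : IsUnit u) (K : Submodule A B) : u • K = K := by
  obtain ⟨v, rfl⟩ := hu
  refine le_antisymm (Submodule.smul_le_self_of_tower _ _) ?_
  intro x hx
  refine (aux_mem_psmul _ _ _).mpr ⟨((v⁻¹ : Aˣ) : A) • x, K.smul_mem _ hx, ?_⟩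
  rw [smul_smul, Units.mul_inv, one_smul]

lemma aux_loc_smul {R M : Type*} [CommRing R] [AddCommGroup M] [Module R M]
    (S : Submonoid R) (c : R) (N : Submodule R M) :
    (algebraMap R (Localization S) c) • (N.localized S) = (c • N).localized S := by
  ext x
  rw [aux_mem_psmul, Submodule.mem_localized']
  constructor
  · rintro ⟨y, hy, rfl⟩
    rw [Submodule.mem_localized'] at hy
    obtain ⟨m, hm, s, rfl⟩ := hy
    refine ⟨c • m, Submodule.smul_mem_pointwise_smul _ _ _ hm, s, ?_⟩
    rw [IsLocalizedModule.mk'_smul, algebraMap_smul]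
  · rintro ⟨y, hy, s, rfl⟩
    obtain ⟨m, hm, rfl⟩ := hy
    exact ⟨IsLocalizedModule.mk' _ m s, ⟨m, hm, s, rfl⟩,
      by rw [algebraMap_smul, ← IsLocalizedModule.mk'_smul]; rfl⟩

theorem stmt_8 {R : Type*} [CommRing R] {M : Type*} [AddCommGroup M] [Module R M]
    (S : Submonoid R) (h0 : (0 : R) ∉ S) (N : Submodule R M) (hfg : N.FG)
    (h : IsSSecondary (S : Set R) N) :
    N.localized S ≠ ⊥ ∧
      ∀ x : Localization S,
        x • N.localized S = N.localized S ∨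
          ∃ k : ℕ, 1 ≤ k ∧ (x ^ k) • N.localized S = ⊥ := by
  classical
  obtain ⟨hdisj, s0, hs0, hsec⟩ := h
  constructor
  · -- N.localized S ≠ ⊥
    intro hbot
    obtain ⟨G, hG⟩ := hfg
    have key : ∀ g ∈ G, ∃ u : S, (u : R) • g = 0 := by
      intro g hg
      have hgN : g ∈ N := hG ▸ Submodule.subset_span hg
      have : IsLocalizedModule.mk' (LocalizedModule.mkLinearMap S M) g (1 : S)
          ∈ N.localized S := ⟨g, hgN, 1, rfl⟩
      rw [hbot, Submodule.mem_bot] at this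
      exact (IsLocalizedModule.mk'_eq_zero' _ _).mp this
    choose uf huf using key
    set u : R := ∏ g ∈ G.attach, (uf g g.2 : R) with hu
    have hus : u ∈ S := Submonoid.prod_mem S (fun g _ => (uf g g.2).2)
    have hann : u ∈ N.annihilator := by
      rw [Submodule.mem_annihilator]
      intro n hn
      rw [← hG] at hn
      induction hn using Submodule.span_induction with
      | mem g hg =>
        have hg' : g ∈ G := hg
        show (∏ g ∈ G.attach, (uf g g.2 : R)) • g = 0
        rw [← Finset.mul_prod_erase G.attach _ (Finset.mem_attach G ⟨g, hg'⟩),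
          mul_comm, mul_smul, huf g hg', smul_zero]
      | zero => simp
      | add a b _ _ ha hb => rw [smul_add, ha, hb, add_zero]
      | smul r a _ ha => rw [smul_comm, ha, smul_zero]
    have : u ∈ (N.annihilator.radical : Set R) ∩ S :=
      ⟨N.annihilator.le_radical hann, hus⟩
    rw [hdisj] at this
    exact this
  · intro x
    obtain ⟨r, t, rfl⟩ := IsLocalization.exists_mk'_eq S x
    have hut : IsUnit (algebraMap R (Localization S) (t : R)) :=
      IsLocalization.map_units _ t
    have hxu : IsLocalization.mk' (Localization S) r t * algebraMap R (Localization S) (t : R)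
        = algebraMap R (Localization S) r := IsLocalization.mk'_spec _ r t
    have hs0u : IsUnit (algebraMap R (Localization S) s0) :=
      IsLocalization.map_units _ ⟨s0, hs0⟩
    have hx : IsLocalization.mk' (Localization S) r t • N.localized S
        = algebraMap R (Localization S) r • N.localized S := by
      conv_lhs => rw [← aux_unit_smul hut (N.localized S), smul_smul, hxu]
    rcases hsec r with hcase | ⟨k, hk1, hkt⟩
    · left
      have h1 : algebraMap R (Localization S) (s0 * r) • N.localized S
          = algebraMap R (Localization S) s0 • N.localized S := by
        rw [aux_loc_smul, aux_loc_smul, hcase]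
      rw [map_mul, mul_smul, aux_unit_smul hs0u] at h1
      rw [hx]
      calc algebraMap R (Localization S) r • N.localized S
          = algebraMap R (Localization S) s0 •
            (algebraMap R (Localization S) r • N.localized S) := by
            rw [aux_unit_smul hs0u]
        _ = N.localized S := by rw [h1, aux_unit_smul hs0u, aux_unit_smul hs0u]
    · right
      refine ⟨k, hk1, ?_⟩
      have h1 : algebraMap R (Localization S) ((s0 * r) ^ k) • N.localized S = ⊥ := by
        rw [aux_loc_smul, hkt]
        exact Submodule.localized'_bot (Localization S) S (LocalizedModule.mkLinearMap S M)
      rw [map_pow, map_mul, mul_pow, mul_smul, aux_unit_smul (hs0u.pow k)] at h1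
      have h2 : (IsLocalization.mk' (Localization S) r t) ^ k • N.localized S
          = (algebraMap R (Localization S) r) ^ k • N.localized S := by
        conv_lhs => rw [← aux_unit_smul (hut.pow k) (N.localized S), smul_smul, ← mul_pow, hxu]
      rw [h2, h1]
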